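/- (Rayleigh monotonicity) Let G and H be weighted graphs on the same finite vertex set V such that Q_H(x) ≤ Q_G(x) for every x : V → ℝ, and let u and v be distinct vertices that are joined in H by a path all of whose edges have positive weight. Then R_{u,v}[G] ≤ R_{u,v}[H]. -/
import Mathlib


/-- A weighted graph on a finite vertex set `V`: a symmetric weight function with zero
diagonal and nonnegative weights. -/
def IsWeightedGraph {V : Type*} (w : V → V → ℝ) : Prop :=
  (∀ i j, w i j = w j i) ∧ (∀ i, w i i = 0) ∧ (∀ i j, 0 ≤ w i j)

/-- The Laplacian quadratic form `Q_G(x) = (1/2)·Σ_{i,j} w(i,j)·(x i − x j)²`. -/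
noncomputable def lapQF {V : Type*} [Fintype V] (w : V → V → ℝ) (x : V → ℝ) : ℝ :=
  (1 / 2) * ∑ i, ∑ j, w i j * (x i - x j) ^ 2

/-- `f : Fin (k+1) → V` is a path in the graph with weights `w` from `u` to `v`:
its vertices are distinct and all its edges have positive weight. -/
def IsPathIn {V : Type*} (w : V → V → ℝ) (u v : V) (k : ℕ) (f : Fin (k + 1) → V) : Prop :=
  f 0 = u ∧ f (Fin.last k) = v ∧ Function.Injective f ∧
    ∀ i : Fin k, 0 < w (f i.castSucc) (f i.succ)

/-- The effective resistance between `u` and `v`: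
`R_{u,v}[G] = sup { (x u − x v)² / Q_G(x) : Q_G(x) > 0 }`. -/
noncomputable def effRes {V : Type*} [Fintype V] (w : V → V → ℝ) (u v : V) : ℝ :=
  sSup {r : ℝ | ∃ x : V → ℝ, 0 < lapQF w x ∧ r = (x u - x v) ^ 2 / lapQF w x}

lemma lapQF_nonneg {V : Type*} [Fintype V] {w : V → V → ℝ} (hw : ∀ i j, 0 ≤ w i j)
    (x : V → ℝ) : 0 ≤ lapQF w x := by
  unfold lapQF
  apply mul_nonneg (by norm_num)
  exact Finset.sum_nonneg fun i _ => Finset.sum_nonneg fun j _ =>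
    mul_nonneg (hw i j) (sq_nonneg _)

lemma term_le_lapQF {V : Type*} [Fintype V] {w : V → V → ℝ} (hw : ∀ i j, 0 ≤ w i j)
    (x : V → ℝ) (i j : V) : w i j * (x i - x j) ^ 2 ≤ 2 * lapQF w x := by
  have h1 : w i j * (x i - x j) ^ 2 ≤ ∑ b, w i b * (x i - x b) ^ 2 :=
    Finset.single_le_sum (f := fun b => w i b * (x i - x b) ^ 2)
      (fun b _ => mul_nonneg (hw i b) (sq_nonneg _)) (Finset.mem_univ j)
  have h2 : (∑ b, w i b * (x i - x b) ^ 2) ≤ ∑ a, ∑ b, w a b * (x a - x b) ^ 2 :=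
    Finset.single_le_sum (f := fun a => ∑ b, w a b * (x a - x b) ^ 2)
      (fun a _ => Finset.sum_nonneg fun b _ =>
        mul_nonneg (hw a b) (sq_nonneg _)) (Finset.mem_univ i)
  unfold lapQF
  linarith

/-- Telescoping sum along `Fin`. -/
lemma tele_fin : ∀ {k : ℕ} (y : Fin (k + 1) → ℝ),
    y 0 - y (Fin.last k) = ∑ i : Fin k, (y i.castSucc - y i.succ) := by
  intro k
  induction k with
  | zero => simp
  | succ k ih =>
    intro y
    rw [Fin.sum_univ_castSucc]
    simp only [Fin.succ_castSucc]
    rw [← ih (fun i => y i.castSucc)]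
    rw [show ((0 : Fin (k + 1)).castSucc) = (0 : Fin (k + 2)) from rfl, Fin.succ_last]
    ring

/-- If the quadratic form vanishes, `x` is constant along any positive-weight path. -/
lemma eq_of_lapQF_zero {V : Type*} [Fintype V] {w : V → V → ℝ} (hw : ∀ i j, 0 ≤ w i j)
    {x : V → ℝ} (h0 : lapQF w x = 0) {u v : V} {k : ℕ} {f : Fin (k + 1) → V}
    (hf0 : f 0 = u) (hfl : f (Fin.last k) = v)
    (hfe : ∀ i : Fin k, 0 < w (f i.castSucc) (f i.succ)) : x u = x v := by
  have step : ∀ i : Fin k, x (f i.castSucc) = x (f i.succ) := by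
    intro i
    have h1 := term_le_lapQF hw x (f i.castSucc) (f i.succ)
    rw [h0] at h1
    have h2 : 0 ≤ w (f i.castSucc) (f i.succ) * (x (f i.castSucc) - x (f i.succ)) ^ 2 :=
      mul_nonneg (hw _ _) (sq_nonneg _)
    have h3 : (x (f i.castSucc) - x (f i.succ)) ^ 2 = 0 := by
      have hwpos := hfe i
      nlinarith [sq_nonneg (x (f i.castSucc) - x (f i.succ))]
    have := pow_eq_zero_iff (n := 2) (by norm_num) |>.mp h3
    linarith [sub_eq_zero.mp this]
  have all : ∀ n (hn : n < k + 1), x (f ⟨n, hn⟩) = x (f 0) := by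
    intro n
    induction n with
    | zero => intro hn; rfl
    | succ n ih =>
      intro hn
      have hn' : n < k := by omega
      have hs := step ⟨n, hn'⟩
      have e1 : ((⟨n, hn'⟩ : Fin k).castSucc) = (⟨n, by omega⟩ : Fin (k + 1)) := rfl
      have e2 : ((⟨n, hn'⟩ : Fin k).succ) = (⟨n + 1, hn⟩ : Fin (k + 1)) := rfl
      rw [e1, e2] at hs
      rw [← hs]
      exact ih (by omega)
  have := all k (Nat.lt_succ_self k)
  rw [show (⟨k, Nat.lt_succ_self k⟩ : Fin (k + 1)) = Fin.last k from rfl, hfl, hf0] at this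
  exact this.symm

/-- Rayleigh monotonicity: if `Q_H ≤ Q_G` pointwise and `u ≠ v` are joined in `H` by a
path with positive-weight edges, then `R_{u,v}[G] ≤ R_{u,v}[H]`. -/
theorem rayleigh_monotonicity {V : Type*} [Fintype V] [DecidableEq V]
    (wG wH : V → V → ℝ) (hG : IsWeightedGraph wG) (hH : IsWeightedGraph wH)
    (hle : ∀ x : V → ℝ, lapQF wH x ≤ lapQF wG x)
    (u v : V) (huv : u ≠ v)
    (k : ℕ) (f : Fin (k + 1) → V) (hp : IsPathIn wH u v k f) :
    effRes wG u v ≤ effRes wH u v := by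
  obtain ⟨hHsym, hHdiag, hHnn⟩ := hH
  obtain ⟨hGsym, hGdiag, hGnn⟩ := hG
  obtain ⟨hf0, hfl, hfinj, hfe⟩ := hp
  set S := {r : ℝ | ∃ x : V → ℝ, 0 < lapQF wH x ∧ r = (x u - x v) ^ 2 / lapQF wH x} with hS
  -- a uniform bound : (x u - x v)^2 ≤ C * Q_H(x)
  set C : ℝ := 2 * k * ∑ i : Fin k, (wH (f i.castSucc) (f i.succ))⁻¹ with hCdef
  have key : ∀ x : V → ℝ, (x u - x v) ^ 2 ≤ C * lapQF wH x := by
    intro x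
    set Q := lapQF wH x with hQ
    have hQnn : 0 ≤ Q := lapQF_nonneg hHnn x
    -- telescoping
    have tele : x u - x v = ∑ i : Fin k, (x (f i.castSucc) - x (f i.succ)) := by
      have := tele_fin (fun i => x (f i))
      simpa [hf0, hfl] using this
    -- Cauchy–Schwarz
    have cs : (∑ i : Fin k, (x (f i.castSucc) - x (f i.succ))) ^ 2
        ≤ (k : ℝ) * ∑ i : Fin k, (x (f i.castSucc) - x (f i.succ)) ^ 2 := by
      calc (∑ i : Fin k, (x (f i.castSucc) - x (f i.succ))) ^ 2
          = (∑ i : Fin k, 1 * (x (f i.castSucc) - x (f i.succ))) ^ 2 := by simp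
        _ ≤ (∑ i : Fin k, (1 : ℝ) ^ 2) * ∑ i : Fin k, (x (f i.castSucc) - x (f i.succ)) ^ 2 :=
            Finset.sum_mul_sq_le_sq_mul_sq Finset.univ _ _
        _ = (k : ℝ) * ∑ i : Fin k, (x (f i.castSucc) - x (f i.succ)) ^ 2 := by simp
    -- each squared difference is at most 2Q/w
    have each : ∀ i : Fin k, (x (f i.castSucc) - x (f i.succ)) ^ 2
        ≤ 2 * Q * (wH (f i.castSucc) (f i.succ))⁻¹ := by
      intro i
      have h1 := term_le_lapQF hHnn x (f i.castSucc) (f i.succ)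
      have hwpos := hfe i
      rw [← hQ] at h1
      calc (x (f i.castSucc) - x (f i.succ)) ^ 2
          ≤ 2 * Q / wH (f i.castSucc) (f i.succ) := by
            rw [le_div_iff₀ hwpos]; linarith
        _ = 2 * Q * (wH (f i.castSucc) (f i.succ))⁻¹ := by ring
    have sum_each : ∑ i : Fin k, (x (f i.castSucc) - x (f i.succ)) ^ 2
        ≤ 2 * Q * ∑ i : Fin k, (wH (f i.castSucc) (f i.succ))⁻¹ := by
      rw [Finset.mul_sum]
      exact Finset.sum_le_sum fun i _ => each i
    have hknn : (0 : ℝ) ≤ k := Nat.cast_nonneg k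
    calc (x u - x v) ^ 2 = (∑ i : Fin k, (x (f i.castSucc) - x (f i.succ))) ^ 2 := by
          rw [tele]
      _ ≤ (k : ℝ) * ∑ i : Fin k, (x (f i.castSucc) - x (f i.succ)) ^ 2 := cs
      _ ≤ (k : ℝ) * (2 * Q * ∑ i : Fin k, (wH (f i.castSucc) (f i.succ))⁻¹) :=
          mul_le_mul_of_nonneg_left sum_each hknn
      _ = C * Q := by rw [hCdef]; ring
  have hCnn : 0 ≤ C := by
    rw [hCdef]
    apply mul_nonneg (by positivity)
    exact Finset.sum_nonneg fun i _ => inv_nonneg.mpr (le_of_lt (hfe i))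
  have hub : ∀ r ∈ S, r ≤ C := by
    rintro r ⟨x, hx, rfl⟩
    rw [div_le_iff₀ hx]
    exact key x
  have hbdd : BddAbove S := ⟨C, hub⟩
  -- S is nonempty: k ≥ 1 since u ≠ v
  have hk : 0 < k := by
    rcases Nat.eq_zero_or_pos k with h | h
    · exfalso; apply huv
      subst h
      rw [← hf0, ← hfl]
      rfl
    · exact h
  have hne : ∃ r ∈ S, 0 ≤ r := by
    set i0 : Fin k := ⟨0, hk⟩ with hi0
    set x : V → ℝ := fun a => if a = u then 1 else 0 with hx
    have hQpos : 0 < lapQF wH x := by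
      have h1 := term_le_lapQF hHnn x (f i0.castSucc) (f i0.succ)
      have hwpos := hfe i0
      have hc : f i0.castSucc = u := by
        rw [show i0.castSucc = (0 : Fin (k + 1)) from by apply Fin.ext; rfl, hf0]
      have hs : f i0.succ ≠ u := by
        intro hcontra
        have : f i0.succ = f (0 : Fin (k + 1)) := by rw [hcontra, hf0]
        have := hfinj this
        have : (i0.succ : Fin (k+1)).val = 0 := by rw [this]; rfl
        simp [Fin.val_succ] at this
      have hxval : x (f i0.castSucc) - x (f i0.succ) = 1 := by
        rw [hc]
        simp [hx, hs]
      rw [hxval] at h1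
      nlinarith
    refine ⟨(x u - x v) ^ 2 / lapQF wH x, ⟨x, hQpos, rfl⟩, ?_⟩
    positivity
  obtain ⟨r0, hr0S, hr0⟩ := hne
  have hsup0 : 0 ≤ sSup S := le_trans hr0 (le_csSup hbdd hr0S)
  apply Real.sSup_le _ hsup0
  rintro r ⟨x, hxG, rfl⟩
  have hHnn' : 0 ≤ lapQF wH x := lapQF_nonneg hHnn x
  rcases eq_or_lt_of_le hHnn' with h0 | hpos
  · -- Q_H(x) = 0 : then x u = x v along the path, so r = 0
    have hxuv : x u = x v := eq_of_lapQF_zero hHnn h0.symm hf0 hfl hfe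
    rw [hxuv]
    simpa using hsup0
  · have h1 : (x u - x v) ^ 2 / lapQF wG x ≤ (x u - x v) ^ 2 / lapQF wH x :=
      div_le_div_of_nonneg_left (sq_nonneg _) hpos (hle x)
    exact h1.trans (le_csSup hbdd ⟨x, hpos, rfl⟩)
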